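/- arXiv:cs/0205010 — 4 statements merged into one kernel-verified Lean document; each statement's English description precedes it below -/
import Mathlib

section
/- Let k be a natural number and define, for real x ≥ 1, f(x) = 2^k · ⌊log₂ x⌋ + ⌊x / 2^{⌊log₂ x⌋ - k}⌋ - 2^k. Then f is monotone nondecreasing: for all real x, y with 1 ≤ x ≤ y, f(x) ≤ f(y). -/
lemma floor_logb_two (x : ℝ) (hx : 1 ≤ x) :
    ⌊Real.logb 2 x⌋ = Int.log 2 x := by
  have : ((2:ℕ):ℝ) = (2:ℝ) := by norm_num
  rw [← this, Real.floor_logb_natCast (by linarith)]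

lemma pow_floor_le (x : ℝ) (hx : 1 ≤ x) :
    (2:ℝ) ^ (⌊Real.logb 2 x⌋) ≤ x := by
  rw [floor_logb_two x hx]
  have := Int.zpow_log_le_self (b := 2) (r := x) (by norm_num) (by linarith)
  simpa using this

lemma lt_pow_floor_succ (x : ℝ) (hx : 1 ≤ x) :
    x < (2:ℝ) ^ (⌊Real.logb 2 x⌋ + 1) := by
  rw [floor_logb_two x hx]
  have := Int.lt_zpow_succ_log_self (b := 2) (by norm_num) x
  simpa using this

/-- The universe-reduction map
`f(x) = 2^k · ⌊log₂ x⌋ + ⌊x / 2^(⌊log₂ x⌋ - k)⌋ - 2^k`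
is monotone nondecreasing on `[1, ∞)`. -/
theorem reduction_map_monotone (k : ℕ)
    (f : ℝ → ℤ)
    (hf : ∀ x : ℝ, 1 ≤ x →
      f x = 2 ^ k * ⌊Real.logb 2 x⌋ + ⌊x / (2 : ℝ) ^ (⌊Real.logb 2 x⌋ - (k : ℤ))⌋ - 2 ^ k) :
    ∀ x y : ℝ, 1 ≤ x → x ≤ y → f x ≤ f y := by
  intro x y hx hxy
  have hy : (1:ℝ) ≤ y := le_trans hx hxy
  rw [hf x hx, hf y hy]
  set lx := ⌊Real.logb 2 x⌋ with hlx
  set ly := ⌊Real.logb 2 y⌋ with hly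
  have hll : lx ≤ ly := by
    apply Int.floor_le_floor
    exact Real.logb_le_logb_of_le one_lt_two (by linarith) hxy
  rcases eq_or_lt_of_le hll with h | h
  · rw [← h]
    have hpos : (0:ℝ) < (2:ℝ) ^ (lx - (k:ℤ)) := zpow_pos (by norm_num) _
    gcongr
  · -- lx < ly
    have hfx : ⌊x / (2:ℝ) ^ (lx - (k:ℤ))⌋ ≤ 2 ^ (k+1) - 1 := by
      have hpos : (0:ℝ) < (2:ℝ) ^ (lx - (k:ℤ)) := zpow_pos (by norm_num) _
      have hxlt : x < (2:ℝ) ^ (lx + 1) := lt_pow_floor_succ x hx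
      have : x / (2:ℝ) ^ (lx - (k:ℤ)) < (2:ℝ) ^ ((k:ℤ)+1) := by
        rw [div_lt_iff₀ hpos, ← zpow_add₀ (by norm_num : (2:ℝ) ≠ 0)]
        rw [show (k:ℤ) + 1 + (lx - (k:ℤ)) = lx + 1 by ring]
        exact hxlt
      have h2 : (((2:ℤ) ^ (k+1) : ℤ) : ℝ) = (2:ℝ) ^ ((k:ℤ)+1) := by
        rw [show ((k:ℤ)+1) = ((k+1:ℕ):ℤ) by push_cast; ring, zpow_natCast]
        push_cast; ring
      have hfl : ⌊x / (2:ℝ) ^ (lx - (k:ℤ))⌋ < (2:ℤ) ^ (k+1) :=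
        Int.floor_lt.mpr (by rw [h2]; exact this)
      omega
    have hfy : (2:ℤ) ^ k ≤ ⌊y / (2:ℝ) ^ (ly - (k:ℤ))⌋ := by
      have hpos : (0:ℝ) < (2:ℝ) ^ (ly - (k:ℤ)) := zpow_pos (by norm_num) _
      have hyge : (2:ℝ) ^ ly ≤ y := pow_floor_le y hy
      have key : (2:ℝ) ^ (k:ℤ) * (2:ℝ) ^ (ly - (k:ℤ)) = (2:ℝ) ^ ly := by
        rw [← zpow_add₀ (by norm_num : (2:ℝ) ≠ 0)]; ring_nf
      apply Int.le_floor.mpr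
      rw [le_div_iff₀ hpos]
      push_cast
      rw [← zpow_natCast (2:ℝ) k, key]
      exact hyge
    have hmul : 2 ^ k * lx + 2 ^ k ≤ 2 ^ k * ly := by
      have : lx + 1 ≤ ly := h
      nlinarith [pow_pos (by norm_num : (0:ℤ) < 2) k]
    have : (2:ℤ)^(k+1) = 2^k * 2 := by ring
    omega
end

section
/- Let ε be a real number with 0 < ε ≤ 1, let k = ⌈log₂(1/ε)⌉, and define, for real x ≥ 1, f(x) = 2^k · ⌊log₂ x⌋ + ⌊x / 2^{⌊log₂ x⌋ - k}⌋ - 2^k. Then for all real x, y with x ≥ 1 and y ≥ (1+ε)·x, one has f(y) > f(x); that is, f preserves the strict order of any two elements differing by at least a factor of 1+ε. -/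
private lemma zpow_floor_logb_le {z : ℝ} (hz : 1 ≤ z) :
    (2:ℝ) ^ (⌊Real.logb 2 z⌋ : ℤ) ≤ z := by
  have hz0 : 0 < z := lt_of_lt_of_le one_pos hz
  calc (2:ℝ) ^ (⌊Real.logb 2 z⌋ : ℤ) = (2:ℝ) ^ ((⌊Real.logb 2 z⌋ : ℤ) : ℝ) :=
        (Real.rpow_intCast 2 _).symm
    _ ≤ (2:ℝ) ^ (Real.logb 2 z) :=
        Real.rpow_le_rpow_of_exponent_le (by norm_num) (Int.floor_le _)
    _ = z := Real.rpow_logb (by norm_num) (by norm_num) hz0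

private lemma lt_zpow_floor_logb {z : ℝ} (hz : 1 ≤ z) :
    z < (2:ℝ) ^ (⌊Real.logb 2 z⌋ + 1 : ℤ) := by
  have hz0 : 0 < z := lt_of_lt_of_le one_pos hz
  calc z = (2:ℝ) ^ (Real.logb 2 z) :=
        (Real.rpow_logb (by norm_num) (by norm_num) hz0).symm
    _ < (2:ℝ) ^ (((⌊Real.logb 2 z⌋ + 1 : ℤ) : ℝ)) := by
        apply Real.rpow_lt_rpow_of_exponent_lt (by norm_num)
        push_cast
        exact Int.lt_floor_add_one _
    _ = (2:ℝ) ^ (⌊Real.logb 2 z⌋ + 1 : ℤ) := Real.rpow_intCast 2 _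

/-- With `k = ⌈log₂(1/ε)⌉` for `0 < ε ≤ 1`, the universe-reduction map
`f(x) = 2^k · ⌊log₂ x⌋ + ⌊x / 2^(⌊log₂ x⌋ - k)⌋ - 2^k`
preserves the strict order of any two elements differing by at least a factor `1+ε`. -/
theorem reduction_map_separates (ε : ℝ) (hε : 0 < ε) (hε1 : ε ≤ 1)
    (k : ℕ) (hk : (k : ℤ) = ⌈Real.logb 2 (1 / ε)⌉)
    (f : ℝ → ℤ)
    (hf : ∀ x : ℝ, 1 ≤ x →
      f x = 2 ^ k * ⌊Real.logb 2 x⌋ + ⌊x / (2 : ℝ) ^ (⌊Real.logb 2 x⌋ - (k : ℤ))⌋ - 2 ^ k) :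
    ∀ x y : ℝ, 1 ≤ x → y ≥ (1 + ε) * x → f y > f x := by
  -- `ε * 2^k ≥ 1`
  have hek : (1:ℝ) ≤ ε * 2 ^ k := by
    have hlogk : Real.logb 2 (1/ε) ≤ (k:ℝ) := by
      have hkr : (k:ℝ) = ((⌈Real.logb 2 (1/ε)⌉ : ℤ) : ℝ) := by exact_mod_cast hk
      rw [hkr]
      exact Int.le_ceil _
    have h2k : 1/ε ≤ (2:ℝ) ^ (k:ℕ) := by
      calc 1/ε = (2:ℝ) ^ (Real.logb 2 (1/ε)) :=
            (Real.rpow_logb (by norm_num) (by norm_num) (by positivity)).symm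
        _ ≤ (2:ℝ) ^ ((k:ℕ):ℝ) :=
            Real.rpow_le_rpow_of_exponent_le (by norm_num) hlogk
        _ = (2:ℝ) ^ (k:ℕ) := Real.rpow_natCast 2 k
    rw [div_le_iff₀ hε] at h2k
    linarith [h2k]
  intro x y hx hxy
  have hx0 : (0:ℝ) < x := by linarith
  have hy1 : (1:ℝ) ≤ y := by nlinarith
  have hxley : x ≤ y := by nlinarith
  set ℓx := ⌊Real.logb 2 x⌋ with hℓx
  set ℓy := ⌊Real.logb 2 y⌋ with hℓy
  have hℓ : ℓx ≤ ℓy := by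
    apply Int.floor_le_floor
    exact Real.logb_le_logb_of_le (by norm_num) hx0 hxley
  have hpx : (2:ℝ) ^ (ℓx : ℤ) ≤ x := zpow_floor_logb_le hx
  have hpy : (2:ℝ) ^ (ℓy : ℤ) ≤ y := zpow_floor_logb_le hy1
  have hpx' : x < (2:ℝ) ^ (ℓx + 1 : ℤ) := lt_zpow_floor_logb hx
  rw [hf x hx, hf y hy1, ← hℓx, ← hℓy]
  have hdx : (0:ℝ) < (2:ℝ) ^ (ℓx - (k:ℤ)) := by positivity
  have hdy : (0:ℝ) < (2:ℝ) ^ (ℓy - (k:ℤ)) := by positivity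
  have hzk : ((2:ℝ) ^ (k:ℤ)) = (2:ℝ) ^ (k:ℕ) := zpow_natCast 2 k
  have hmul : (2:ℝ) ^ (ℓx - (k:ℤ)) * (2:ℝ) ^ (k:ℤ) = (2:ℝ) ^ (ℓx:ℤ) := by
    rw [← zpow_add₀ (by norm_num : (2:ℝ) ≠ 0)]; ring_nf
  rcases eq_or_lt_of_le hℓ with heq | hlt
  · -- same exponent: floors differ by at least 1
    rw [← heq]
    have hd_le : (2:ℝ) ^ (ℓx - (k:ℤ)) ≤ ε * x := by
      have h1 : (2:ℝ) ^ (ℓx:ℤ) ≤ x := hpx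
      have h2 : (2:ℝ) ^ (ℓx - (k:ℤ)) * (ε * (2:ℝ)^(k:ℕ)) = ε * (2:ℝ) ^ (ℓx:ℤ) := by
        rw [← hzk]; rw [← hmul]; ring
      nlinarith [hdx, mul_le_mul_of_nonneg_left hek (le_of_lt hdx)]
    have hstep : x / (2:ℝ) ^ (ℓx - (k:ℤ)) + 1 ≤ y / (2:ℝ) ^ (ℓx - (k:ℤ)) := by
      rw [div_add' _ _ _ (ne_of_gt hdx), div_le_div_iff₀ hdx hdx]
      nlinarith
    have hfl : ⌊x / (2:ℝ) ^ (ℓx - (k:ℤ))⌋ + 1 ≤ ⌊y / (2:ℝ) ^ (ℓx - (k:ℤ))⌋ := by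
      apply Int.le_floor.mpr
      push_cast
      calc (⌊x / (2:ℝ) ^ (ℓx - (k:ℤ))⌋ : ℝ) + 1 ≤ x / (2:ℝ) ^ (ℓx - (k:ℤ)) + 1 := by
            linarith [Int.floor_le (x / (2:ℝ) ^ (ℓx - (k:ℤ)))]
        _ ≤ _ := hstep
    omega
  · -- different exponents
    have hFy : (2:ℤ) ^ k ≤ ⌊y / (2:ℝ) ^ (ℓy - (k:ℤ))⌋ := by
      apply Int.le_floor.mpr
      rw [le_div_iff₀ hdy]
      push_cast
      calc (2:ℝ) ^ (k:ℕ) * (2:ℝ) ^ (ℓy - (k:ℤ)) = (2:ℝ) ^ (ℓy:ℤ) := by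
            rw [← hzk, ← zpow_add₀ (by norm_num : (2:ℝ) ≠ 0)]; ring_nf
        _ ≤ y := hpy
    have hFx : ⌊x / (2:ℝ) ^ (ℓx - (k:ℤ))⌋ < 2 * (2:ℤ) ^ k := by
      apply Int.floor_lt.mpr
      rw [div_lt_iff₀ hdx]
      push_cast
      calc x < (2:ℝ) ^ (ℓx + 1 : ℤ) := hpx'
        _ = (2:ℝ) ^ (ℓx : ℤ) * 2 := by
            rw [zpow_add₀ (by norm_num : (2:ℝ) ≠ 0), zpow_one]
        _ = 2 * (2:ℝ) ^ (k:ℕ) * (2:ℝ) ^ (ℓx - (k:ℤ)) := by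
            rw [← hzk, ← hmul]; ring
    have hmul2 : (2:ℤ) ^ k * ℓx + (2:ℤ)^k ≤ (2:ℤ) ^ k * ℓy := by
      have h1 : ℓx + 1 ≤ ℓy := hlt
      nlinarith [pow_pos (show (0:ℤ) < 2 by norm_num) k]
    omega
end

section
/- Let ε be a real number with 0 < ε ≤ 1, let k = ⌈log₂(1/ε)⌉, and define, for real x ≥ 1, f(x) = 2^k · ⌊log₂ x⌋ + ⌊x / 2^{⌊log₂ x⌋ - k}⌋ - 2^k. Then f(1) = 0, and for every real U ≥ 2 and every x with 1 ≤ x ≤ U, one has f(x) < 2^{k+1} · log₂ U. -/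
/-- With `k = ⌈log₂(1/ε)⌉` for `0 < ε ≤ 1`, the universe-reduction map
`f(x) = 2^k · ⌊log₂ x⌋ + ⌊x / 2^(⌊log₂ x⌋ - k)⌋ - 2^k`
satisfies `f(1) = 0` and `f(x) < 2^(k+1) · log₂ U` for all `1 ≤ x ≤ U`, `U ≥ 2`. -/
theorem reduction_map_range (ε : ℝ) (hε : 0 < ε) (hε1 : ε ≤ 1)
    (k : ℕ) (hk : (k : ℤ) = ⌈Real.logb 2 (1 / ε)⌉)
    (f : ℝ → ℤ)
    (hf : ∀ x : ℝ, 1 ≤ x →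
      f x = 2 ^ k * ⌊Real.logb 2 x⌋ + ⌊x / (2 : ℝ) ^ (⌊Real.logb 2 x⌋ - (k : ℤ))⌋ - 2 ^ k) :
    f 1 = 0 ∧
      ∀ U : ℝ, 2 ≤ U → ∀ x : ℝ, 1 ≤ x → x ≤ U →
        (f x : ℝ) < 2 ^ (k + 1) * Real.logb 2 U := by
  constructor
  · rw [hf 1 le_rfl]
    have h1 : Real.logb 2 1 = 0 := Real.logb_one
    rw [h1]
    norm_num
    rw [show ((2:ℝ)^k) = (((2:ℤ)^k : ℤ) : ℝ) by push_cast; ring, Int.floor_intCast]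
    ring
  · intro U hU x hx hxU
    have hb : (1:ℝ) < 2 := one_lt_two
    have hx0 : (0:ℝ) < x := by linarith
    set L := ⌊Real.logb 2 x⌋ with hL
    have hL0 : 0 ≤ L := Int.le_floor.2 (by exact_mod_cast Real.logb_nonneg hb hx)
    have hlt : Real.logb 2 x < (L : ℝ) + 1 := Int.lt_floor_add_one _
    have hLle : (L : ℝ) ≤ Real.logb 2 x := Int.floor_le _
    have hxlt : x < (2:ℝ) ^ (L + 1 : ℤ) := by
      have := (Real.logb_lt_iff_lt_rpow hb hx0).1 hlt
      rwa [show ((L:ℝ) + 1) = ((L + 1 : ℤ) : ℝ) by push_cast; ring,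
        Real.rpow_intCast] at this
    have hpow_pos : (0:ℝ) < (2:ℝ) ^ (L - (k:ℤ)) := zpow_pos (by norm_num) _
    have hsplit : (2:ℝ) ^ (L + 1 : ℤ) = (2:ℝ) ^ (L - (k:ℤ)) * (2:ℝ) ^ ((k:ℤ) + 1) := by
      rw [← zpow_add₀ (by norm_num : (2:ℝ) ≠ 0)]; ring_nf
    have hdiv : x / (2:ℝ) ^ (L - (k:ℤ)) < (2:ℝ) ^ ((k:ℤ) + 1) := by
      rw [div_lt_iff₀ hpow_pos]
      calc x < (2:ℝ) ^ (L + 1 : ℤ) := hxlt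
        _ = (2:ℝ) ^ ((k:ℤ) + 1) * (2:ℝ) ^ (L - (k:ℤ)) := by rw [hsplit]; ring
    have hfloor : ⌊x / (2:ℝ) ^ (L - (k:ℤ))⌋ ≤ 2 ^ (k + 1) - 1 := by
      have : ⌊x / (2:ℝ) ^ (L - (k:ℤ))⌋ < 2 ^ (k + 1) := by
        apply Int.floor_lt.2
        calc x / (2:ℝ) ^ (L - (k:ℤ)) < (2:ℝ) ^ ((k:ℤ) + 1) := hdiv
          _ = ((2 ^ (k + 1) : ℤ) : ℝ) := by
            push_cast
            rw [show ((k:ℤ)+1) = ((k+1:ℕ):ℤ) by push_cast; ring, zpow_natCast]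
      omega
    have hfx : (f x : ℝ) ≤ 2 ^ k * ((L : ℝ) + 1) - 1 := by
      rw [hf x hx, ← hL]
      have : (f x : ℤ) ≤ 2 ^ k * L + (2 ^ (k + 1) - 1) - 2 ^ k := by
        rw [hf x hx, ← hL]; omega
      push_cast
      have h2 : (2:ℝ) ^ k * (L:ℝ) + ((2:ℝ) ^ (k+1) - 1) - (2:ℝ) ^ k
          = 2 ^ k * ((L : ℝ) + 1) - 1 := by ring
      have h3 : ((⌊x / (2:ℝ) ^ (L - (k:ℤ))⌋ : ℤ) : ℝ) ≤ (2:ℝ) ^ (k+1) - 1 := by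
        exact_mod_cast (by exact_mod_cast hfloor : ((⌊x / (2:ℝ) ^ (L - (k:ℤ))⌋ : ℤ) : ℝ) ≤ ((2 ^ (k+1) - 1 : ℤ) : ℝ))
      push_cast at h3
      linarith
    have hlogU : 1 ≤ Real.logb 2 U := by
      exact (Real.le_logb_iff_rpow_le hb (by linarith : (0:ℝ) < U)).2
        (by rw [Real.rpow_one]; exact hU)
    have hlogx : Real.logb 2 x ≤ Real.logb 2 U := Real.logb_le_logb_of_le hb hx0 hxU
    have hpk : (0:ℝ) < 2 ^ k := by positivity
    have h1 : (2:ℝ) ^ k * ((L : ℝ) + 1) ≤ 2 ^ k * (Real.logb 2 U + 1) := by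
      apply mul_le_mul_of_nonneg_left _ hpk.le
      linarith
    have h2 : (2:ℝ) ^ k * (Real.logb 2 U + 1) ≤ 2 ^ (k + 1) * Real.logb 2 U := by
      have : (2:ℝ) ^ (k+1) = 2 * 2 ^ k := by ring
      rw [this]
      nlinarith
    linarith
end

section
/- Let w and i be natural numbers such that the bitwise-and of w with 2^i − 1 is nonzero, and let j = ⌊log₂(w AND (2^i − 1))⌋. Then bit j of w is set, j < i, and every index j' < i whose bit is set in w satisfies j' ≤ j; that is, j is the index of the most significant 1-bit of w among the bits of index less than i. -/
private lemma testBit_log_self (m : ℕ) (h : m ≠ 0) : m.testBit (Nat.log 2 m) := by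
  have h1 := Nat.pow_log_le_self 2 h
  have h2 := Nat.lt_pow_succ_log_self (by norm_num : 1 < 2) m
  rw [Nat.testBit_eq_decide_div_mod_eq]
  have : m / 2 ^ Nat.log 2 m = 1 := by
    apply Nat.div_eq_of_lt_le
    · simpa using h1
    · simpa [pow_succ, mul_comm] using h2
  simp [this]

/-- Correctness of the bit-vector `Search` operation: if `w AND (2^i − 1)` is nonzero
and `j = ⌊log₂ (w AND (2^i − 1))⌋`, then bit `j` of `w` is set, `j < i`, and `j` is the
largest index `< i` whose bit is set in `w`. -/
theorem bitvector_search_correct (w i : ℕ) (h : w &&& (2 ^ i - 1) ≠ 0) :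
    w.testBit (Nat.log 2 (w &&& (2 ^ i - 1))) ∧
      Nat.log 2 (w &&& (2 ^ i - 1)) < i ∧
      ∀ j' : ℕ, j' < i → w.testBit j' → j' ≤ Nat.log 2 (w &&& (2 ^ i - 1)) := by
  set m := w &&& (2 ^ i - 1) with hm
  have hbit : ∀ k, m.testBit k = (w.testBit k && decide (k < i)) := by
    intro k
    rw [hm, Nat.testBit_and, Nat.testBit_two_pow_sub_one]
  have hlog := testBit_log_self m h
  have hw : w.testBit (Nat.log 2 m) ∧ Nat.log 2 m < i := by
    have := hbit (Nat.log 2 m)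
    rw [this] at hlog
    simpa using hlog
  refine ⟨hw.1, hw.2, fun j' hji hjw => ?_⟩
  by_contra hlt
  push_neg at hlt
  have : m.testBit j' = true := by
    rw [hbit]
    simp [hjw, hji]
  have hle : 2 ^ j' ≤ m := Nat.ge_two_pow_of_testBit this
  have := Nat.lt_pow_succ_log_self (by norm_num : 1 < 2) m
  have : 2 ^ j' < 2 ^ (Nat.log 2 m + 1) := lt_of_le_of_lt hle this
  have := Nat.pow_lt_pow_iff_right (by norm_num : 1 < 2) |>.mp this
  omega
end
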